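/- In NIM with Cash with subtraction set A = {1, 2} and even n ≡ 0 or 2 or 4 (mod 6), if d = n/2 + 1 + k and e ≥ n/2 + k + 1 for some natural number k (and e is below Player 2's upper-class threshold), then Player 2 wins NIM({1,2}; n; d, e). -/
import Mathlib


/-- Upper-class threshold for the winning player in NIM({1,2};n)
(Theorem 3.1 with L = 2, writing n = 3k + i). -/
def nimUwin12 (n : ℕ) : ℕ :=
  if n % 3 = 2 then 2 * (n / 3 + 1) else 2 * (n / 3) + n % 3

/-- Upper-class threshold for the losing player in NIM({1,2};n). -/
def nimUlose12 (n : ℕ) : ℕ :=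
  if n < 2 then n / 2 else if n % 3 = 2 then 2 * (n / 3) + 1 else 2 * (n / 3)

/-- Player 2's upper-class threshold U₂(n) for A = {1,2}
(the second player wins ordinary NIM({1,2};n) iff 3 ∣ n). -/
def nimU2 (n : ℕ) : ℕ := if n % 3 = 0 then nimUwin12 n else nimUlose12 n

/-- Arithmetic characterization of the mover-loses positions of NIM({1,2}) with cash. -/
def NimLose (n m m' : ℕ) : Prop :=
  (n % 3 = 0 ∧ (m ≤ m' ∨ 2 * (n / 3) ≤ m')) ∨ (n % 3 ≠ 0 ∧ 3 * m ≤ 2 * n ∧ m ≤ m')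

theorem nimCash_12_key (W : ℕ → ℕ → ℕ → Prop)
    (hW : ∀ n m m', W n m m' ↔
      ∃ a ∈ ({1, 2} : Finset ℕ), a ≤ n ∧ a ≤ m ∧ ¬ W (n - a) m' (m - a)) :
    ∀ n m m', ¬ W n m m' ↔ NimLose n m m' := by
  intro n
  induction n using Nat.strong_induction_on with
  | _ n ih =>
    intro m m'
    have key : W n m m' ↔
        (1 ≤ n ∧ 1 ≤ m ∧ ¬ W (n - 1) m' (m - 1)) ∨
        (2 ≤ n ∧ 2 ≤ m ∧ ¬ W (n - 2) m' (m - 2)) := by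
      rw [hW]
      constructor
      · rintro ⟨a, ha, h1, h2, h3⟩
        simp only [Finset.mem_insert, Finset.mem_singleton] at ha
        rcases ha with rfl | rfl
        · exact Or.inl ⟨h1, h2, h3⟩
        · exact Or.inr ⟨h1, h2, h3⟩
      · rintro (⟨h1, h2, h3⟩ | ⟨h1, h2, h3⟩)
        · exact ⟨1, by simp, h1, h2, h3⟩
        · exact ⟨2, by simp, h1, h2, h3⟩
    match n, ih with
    | 0, ih =>
      rw [key]
      constructor
      · intro _
        unfold NimLose
        omega
      · intro _
        rintro (⟨h1, _⟩ | ⟨h1, _⟩) <;> omega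
    | 1, ih =>
      have w1 : ¬ W (1 - 1) m' (m - 1) ↔ NimLose 0 m' (m - 1) := ih 0 (by omega) m' (m - 1)
      rw [key, w1]
      constructor
      · intro h
        have hA : ¬(1 ≤ 1 ∧ 1 ≤ m ∧ NimLose 0 m' (m - 1)) := fun ha => h (Or.inl ha)
        unfold NimLose at hA ⊢
        omega
      · intro h
        rintro (⟨_, h2, h3⟩ | ⟨h1, _⟩)
        · unfold NimLose at h h3; omega
        · omega
    | (n + 2), ih =>
      have w1 : ¬ W (n + 2 - 1) m' (m - 1) ↔ NimLose (n + 1) m' (m - 1) :=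
        ih (n + 1) (by omega) m' (m - 1)
      have w2 : ¬ W (n + 2 - 2) m' (m - 2) ↔ NimLose n m' (m - 2) :=
        ih n (by omega) m' (m - 2)
      rw [key, w1, w2]
      unfold NimLose
      omega

/-- Staircase theorem rung for A = {1,2}, even n ≡ 0, 2 or 4 (mod 6):
if d = n/2 + 1 + k and e ≥ n/2 + k + 1, with e below Player 2's
upper-class threshold, then Player 2 wins. -/
theorem nimCash_12_staircase_p2 (W : ℕ → ℕ → ℕ → Prop)
    (hW : ∀ n m m', W n m m' ↔
      ∃ a ∈ ({1, 2} : Finset ℕ), a ≤ n ∧ a ≤ m ∧ ¬ W (n - a) m' (m - a))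
    (n d e k : ℕ) (hn : n % 6 = 0 ∨ n % 6 = 2 ∨ n % 6 = 4)
    (hd : d = n / 2 + 1 + k) (he : n / 2 + k + 1 ≤ e)
    (hupper : e < nimU2 n) :
    ¬ W n d e := by
  rw [nimCash_12_key W hW]
  unfold nimU2 nimUwin12 nimUlose12 at hupper
  unfold NimLose
  split_ifs at hupper <;> omega
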